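/- There exist δ' ∈ (0, 3^{3/2}), η > 0 and C > 0 with the following property. Let B ⊂ ℂ be the polygonal contour consisting of the three segments B₁ = { 3^{3/2} − δ' + iy : y ∈ [0, η] }, B₂ = { x + iη : x ∈ [3^{3/2} − δ', 3^{3/2} + δ'] } and B₃ = { 3^{3/2} + δ' + iy : y ∈ [0, η] }. Then for every r ∈ B, Re( (r^{2/3} − 3)²/8 − (2/3) r i ) ≥ C, where r^{2/3} = exp((2/3) Log r) is defined using the principal branch of the logarithm. -/

import Mathlib

/-- The polygonal contour `B = B₁ ∪ B₂ ∪ B₃` joining `3^{3/2} − δ'` to `3^{3/2} + δ'`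
through the upper half-plane at height `η`. -/
def Bcontour (δ' η : ℝ) : Set ℂ :=
  ((fun y : ℝ => (((3:ℝ) ^ ((3:ℝ)/2) - δ' : ℝ) : ℂ) + (y : ℂ) * Complex.I) '' Set.Icc 0 η) ∪
  ((fun x : ℝ => (x : ℂ) + (η : ℂ) * Complex.I) ''
      Set.Icc ((3:ℝ) ^ ((3:ℝ)/2) - δ') ((3:ℝ) ^ ((3:ℝ)/2) + δ')) ∪
  ((fun y : ℝ => (((3:ℝ) ^ ((3:ℝ)/2) + δ' : ℝ) : ℂ) + (y : ℂ) * Complex.I) '' Set.Icc 0 η)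

open Complex Real

/-- If `c³ ≤ x²` then `c ≤ x^{2/3}` (for nonnegative reals). -/
lemma le_rpow23 {x c : ℝ} (hc : 0 ≤ c) (hx : 0 ≤ x) (h : c ^ 3 ≤ x ^ 2) :
    c ≤ x ^ ((2:ℝ)/3) := by
  have h1 : c = (c ^ 3) ^ ((1:ℝ)/3) := by
    rw [← Real.rpow_natCast c 3, ← Real.rpow_mul hc]; norm_num
  have h2 : x ^ ((2:ℝ)/3) = (x ^ 2) ^ ((1:ℝ)/3) := by
    rw [← Real.rpow_natCast x 2, ← Real.rpow_mul hx]; norm_num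
  rw [h1, h2]
  exact Real.rpow_le_rpow (by positivity) h (by norm_num)

/-- If `x² ≤ c³` then `x^{2/3} ≤ c` (for nonnegative reals). -/
lemma rpow23_le {x c : ℝ} (hc : 0 ≤ c) (hx : 0 ≤ x) (h : x ^ 2 ≤ c ^ 3) :
    x ^ ((2:ℝ)/3) ≤ c := by
  have h1 : c = (c ^ 3) ^ ((1:ℝ)/3) := by
    rw [← Real.rpow_natCast c 3, ← Real.rpow_mul hc]; norm_num
  have h2 : x ^ ((2:ℝ)/3) = (x ^ 2) ^ ((1:ℝ)/3) := by
    rw [← Real.rpow_natCast x 2, ← Real.rpow_mul hx]; norm_num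
  rw [h1, h2]
  exact Real.rpow_le_rpow (by positivity) h (by norm_num)

/-- Real and imaginary parts of the principal branch of `r^{2/3}` in polar form. -/
lemma cpow23 (r : ℂ) (hr : r ≠ 0) :
    (r ^ ((2:ℂ)/3)).re = ‖r‖ ^ ((2:ℝ)/3) * Real.cos ((2/3) * r.arg) ∧
    (r ^ ((2:ℂ)/3)).im = ‖r‖ ^ ((2:ℝ)/3) * Real.sin ((2/3) * r.arg) := by
  have h23 : ((2:ℂ)/3) = (((2:ℝ)/3 : ℝ) : ℂ) := by norm_num
  rw [h23, Complex.cpow_def_of_ne_zero hr, Complex.exp_re, Complex.exp_im]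
  have hre : (Complex.log r * (((2:ℝ)/3 : ℝ) : ℂ)).re = Real.log ‖r‖ * (2/3) := by
    simp [Complex.mul_re, Complex.log_re, Complex.log_im]
  have him : (Complex.log r * (((2:ℝ)/3 : ℝ) : ℂ)).im = (2/3) * r.arg := by
    simp [Complex.mul_im, Complex.log_re, Complex.log_im]; ring
  rw [hre, him, Real.rpow_def_of_pos (norm_pos_iff.mpr hr)]
  exact ⟨rfl, rfl⟩

/-- The real part of the phase in terms of real and imaginary parts of `r^{2/3}`. -/
lemma phase_re (r : ℂ) :
    ((r ^ ((2:ℂ)/3) - 3) ^ 2 / 8 - (2/3) * r * Complex.I).re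
      = (((r ^ ((2:ℂ)/3)).re - 3) ^ 2 - (r ^ ((2:ℂ)/3)).im ^ 2) / 8 + (2/3) * r.im := by
  set z := r ^ ((2:ℂ)/3)
  simp [Complex.sub_re, Complex.div_re, Complex.mul_re, Complex.mul_im, Complex.normSq_apply,
    pow_two]

/-- Polar data for `r = x + iy` with `x ∈ [4, 31/5]`, `y ∈ [0, 1/100]`: the modulus to the
power `2/3` and the argument, with quantitative bounds. -/
lemma shared (x y : ℝ) (hx4 : 4 ≤ x) (hx62 : x ≤ 31/5) (hy0 : 0 ≤ y) (hy : y ≤ 1/100) :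
    ∃ ρ θ : ℝ,
      (((x:ℂ) + (y:ℂ) * Complex.I) ^ ((2:ℂ)/3)).re = ρ * Real.cos ((2/3) * θ) ∧
      (((x:ℂ) + (y:ℂ) * Complex.I) ^ ((2:ℂ)/3)).im = ρ * Real.sin ((2/3) * θ) ∧
      0 ≤ θ ∧ θ ≤ 1/200 ∧ 0 ≤ ρ ∧ ρ ≤ 17/5 ∧
      (∀ c : ℝ, 0 ≤ c → c ^ 3 ≤ x ^ 2 + y ^ 2 → c ≤ ρ) ∧
      (∀ c : ℝ, 0 ≤ c → x ^ 2 + y ^ 2 ≤ c ^ 3 → ρ ≤ c) := by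
  set r : ℂ := (x:ℂ) + (y:ℂ) * Complex.I with hrdef
  have hre : r.re = x := by simp [hrdef]
  have him : r.im = y := by simp [hrdef]
  have hr0 : r ≠ 0 := by
    intro h
    rw [h] at hre
    simp at hre
    linarith
  have habs_pos : 0 < ‖r‖ := norm_pos_iff.mpr hr0
  have habs2 : ‖r‖ ^ 2 = x ^ 2 + y ^ 2 := by
    rw [Complex.sq_norm, Complex.normSq_apply, hre, him]; ring
  have hxleabs : x ≤ ‖r‖ := hre ▸ Complex.re_le_norm r
  have harg0 : 0 ≤ r.arg := Complex.arg_nonneg_iff.mpr (him ▸ hy0)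
  have hargpi2 : r.arg ≤ π / 2 := Complex.arg_le_pi_div_two_iff.mpr (Or.inl (by rw [hre]; linarith))
  have hsinarg : Real.sin r.arg = y / ‖r‖ := by rw [Complex.sin_arg, him]
  have hargle : r.arg ≤ 1/200 := by
    have hj := Real.mul_le_sin harg0 hargpi2
    rw [hsinarg] at hj
    have hyR : y / ‖r‖ ≤ 1/400 := by
      rw [div_le_iff₀ habs_pos]
      nlinarith
    have hpi : π ≤ 4 := by linarith [Real.pi_lt_d2]
    have hpi0 : 0 < π := Real.pi_pos
    have h2 := hj.trans hyR
    rw [div_mul_eq_mul_div, div_le_iff₀ hpi0] at h2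
    nlinarith
  refine ⟨‖r‖ ^ ((2:ℝ)/3), r.arg, (cpow23 r hr0).1, (cpow23 r hr0).2,
    harg0, hargle, by positivity, ?_, ?_, ?_⟩
  · exact rpow23_le (by norm_num) habs_pos.le (by rw [habs2]; nlinarith)
  · intro c hc h
    exact le_rpow23 hc habs_pos.le (by rw [habs2]; exact h)
  · intro c hc h
    exact rpow23_le hc habs_pos.le (by rw [habs2]; exact h)

/-- The pointwise lower bound `1/1000` on the real part of the phase, in each of the three
situations occurring on the contour. -/
lemma case_bound (x y : ℝ) (hx4 : 4 ≤ x) (hx62 : x ≤ 31/5) (hy0 : 0 ≤ y) (hy : y ≤ 1/100)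
    (hcase : x ^ 2 + y ^ 2 ≤ (261/100) ^ 3 ∨ (337/100) ^ 3 ≤ x ^ 2 + y ^ 2 ∨ y = 1/100) :
    1/1000 ≤ ((((x:ℂ) + (y:ℂ) * Complex.I) ^ ((2:ℂ)/3) - 3) ^ 2 / 8
        - (2/3) * ((x:ℂ) + (y:ℂ) * Complex.I) * Complex.I).re := by
  obtain ⟨ρ, θ, h1, h2, hθ0, hθ, hρ0, hρ, hlo, hhi⟩ := shared x y hx4 hx62 hy0 hy
  have him : ((x:ℂ) + (y:ℂ) * Complex.I).im = y := by simp
  rw [phase_re, h1, h2, him]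
  set T := (2/3) * θ with hTdef
  have hT0 : 0 ≤ T := by positivity
  have hT : T ≤ 1/300 := by rw [hTdef]; linarith
  have hsin0 : 0 ≤ Real.sin T :=
    Real.sin_nonneg_of_nonneg_of_le_pi hT0 (by nlinarith [Real.pi_gt_three])
  have hsinle : Real.sin T ≤ T := Real.sin_le hT0
  have hcos1 : Real.cos T ≤ 1 := Real.cos_le_one T
  have hcoslo : 1 - T ^ 2 / 2 ≤ Real.cos T := Real.one_sub_sq_div_two_le_cos
  set A := ρ * Real.cos T with hAdef
  set B := ρ * Real.sin T with hBdef
  have hB0 : 0 ≤ B := mul_nonneg hρ0 hsin0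
  have hB : B ≤ 17/1500 := by
    calc B ≤ ρ * T := mul_le_mul_of_nonneg_left hsinle hρ0
    _ ≤ (17/5) * (1/300) := mul_le_mul hρ hT hT0 (by norm_num)
    _ = 17/1500 := by norm_num
  have hB2 : B ^ 2 ≤ (17/1500) ^ 2 := pow_le_pow_left₀ hB0 hB 2
  have hT2 : T ^ 2 ≤ (1/300) ^ 2 := pow_le_pow_left₀ hT0 hT 2
  rcases hcase with hc | hc | hc
  · have hρle : ρ ≤ 261/100 := hhi _ (by norm_num) hc
    have hA : A ≤ 261/100 := by
      calc A ≤ ρ * 1 := mul_le_mul_of_nonneg_left hcos1 hρ0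
      _ ≤ 261/100 := by linarith
    have hsq : (39/100) ^ 2 ≤ (3 - A) ^ 2 := pow_le_pow_left₀ (by norm_num) (by linarith) 2
    have hsq' : (3 - A) ^ 2 = (A - 3) ^ 2 := by ring
    rw [hsq'] at hsq
    linarith
  · have hρge : 337/100 ≤ ρ := hlo _ (by norm_num) hc
    have hcpos : (0:ℝ) ≤ 1 - T ^ 2 / 2 := by linarith
    have hA : 33699/10000 ≤ A := by
      have s1 : ρ * (1 - T ^ 2 / 2) ≤ A := mul_le_mul_of_nonneg_left hcoslo hρ0
      have s2 : (337/100) * (1 - T ^ 2 / 2) ≤ ρ * (1 - T ^ 2 / 2) :=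
        mul_le_mul_of_nonneg_right hρge hcpos
      nlinarith
    have hsq : (3699/10000) ^ 2 ≤ (A - 3) ^ 2 := pow_le_pow_left₀ (by norm_num) (by linarith) 2
    linarith
  · subst hc
    linarith [sq_nonneg (A - 3)]

/-- There exist `δ' ∈ (0, 3^{3/2})`, `η > 0` and `C > 0` such that along the contour `B`,
`Re((r^{2/3} − 3)²/8 − (2/3) r i) ≥ C`, where `r^{2/3}` uses the principal branch. -/
theorem contour_phase_bound :
    ∃ δ' η C : ℝ, 0 < δ' ∧ δ' < (3:ℝ) ^ ((3:ℝ)/2) ∧ 0 < η ∧ 0 < C ∧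
      ∀ r ∈ Bcontour δ' η,
        C ≤ ((r ^ ((2:ℂ)/3) - 3) ^ 2 / 8 - (2/3) * r * Complex.I).re := by
  set a : ℝ := (3:ℝ) ^ ((3:ℝ)/2) with hadef
  have ha0 : 0 < a := Real.rpow_pos_of_pos (by norm_num) _
  have ha2 : a ^ 2 = 27 := by
    rw [hadef, ← Real.rpow_natCast ((3:ℝ) ^ ((3:ℝ)/2)) 2, ← Real.rpow_mul (by norm_num)]
    norm_num
  have ha_hi : a ≤ 51962/10000 := by nlinarith
  have ha_lo : 519/100 ≤ a := by nlinarith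
  refine ⟨1, 1/100, 1/1000, by norm_num, by linarith, by norm_num, by norm_num, ?_⟩
  intro r hr
  simp only [Bcontour, Set.mem_union, Set.mem_image, Set.mem_Icc] at hr
  rcases hr with (⟨t, ⟨ht0, ht1⟩, rfl⟩ | ⟨t, ⟨ht0, ht1⟩, rfl⟩) | ⟨t, ⟨ht0, ht1⟩, rfl⟩
  · exact case_bound (a - 1) t (by linarith) (by linarith) ht0 ht1
      (Or.inl (by nlinarith))
  · exact case_bound t (1/100) (by linarith) (by linarith) (by norm_num) le_rfl
      (Or.inr (Or.inr rfl))
  · exact case_bound (a + 1) t (by linarith) (by linarith) ht0 ht1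
      (Or.inr (Or.inl (by nlinarith)))
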